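/- Two-source success amplification for modular hashing: let x < 2^n, and let D be a (deterministic) procedure that, given w and a pair (p, r) with p prime, searches the (at most 2^b) strings u of length n with C(u | w) < b and outputs the first one with u ≡ r (mod p). If C(x | w) < b and p is uniform over a set P of primes with |P| ≥ 2^b·n/ε, then D(w, (p, x mod p)) = x with probability at least 1 − ε. -/

import Mathlib

/-- An optimal universal machine for plain conditional Kolmogorov complexity.
`V` takes (the pairing of) a program `p` and a condition `z` (both encoded as
natural numbers, standing for binary strings via `Nat.size`-bit encodings) and
may output a string `x`. Optimality: every partial computable machine is
simulated with only a constant additive overhead in program length. -/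
structure OptimalMachine where
  V : ℕ →. ℕ
  partrec : Nat.Partrec V
  optimal : ∀ V' : ℕ →. ℕ, Nat.Partrec V' → ∃ c : ℕ, ∀ p z x : ℕ,
    x ∈ V' (Nat.pair p z) → ∃ q : ℕ, x ∈ V (Nat.pair q z) ∧
      Nat.size q ≤ Nat.size p + c

/-- Plain conditional Kolmogorov complexity C(x|z): the least bit-length of a
program p with U(p, z) = x. -/
noncomputable def KC (U : OptimalMachine) (x z : ℕ) : ℕ :=
  sInf {L | ∃ p : ℕ, x ∈ U.V (Nat.pair p z) ∧ Nat.size p = L}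

open scoped Classical

lemma KC_lt_elim (U : OptimalMachine) (u w b : ℕ) (h : KC U u w < b) :
    ∃ p, u ∈ U.V (Nat.pair p w) ∧ p < 2 ^ b := by
  have hne : {L | ∃ p : ℕ, u ∈ U.V (Nat.pair p w) ∧ Nat.size p = L}.Nonempty := by
    obtain ⟨c, hc⟩ := U.optimal (fun _ => Part.some u)
      (Nat.Partrec.of_primrec (Nat.Primrec.const u))
    obtain ⟨q, hq, _⟩ := hc 0 w u (Part.mem_some u)
    exact ⟨Nat.size q, q, hq, rfl⟩
  obtain ⟨p, hp, hsize⟩ := Nat.sInf_mem hne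
  refine ⟨p, hp, Nat.size_le.mp ?_⟩
  rw [hsize]; exact h.le

lemma card_KC_lt (U : OptimalMachine) (n b w : ℕ) :
    ((Finset.range (2 ^ n)).filter (fun u => KC U u w < b)).card ≤ 2 ^ b := by
  have := Finset.card_le_card_of_injOn
    (f := fun u => if h : ∃ p, u ∈ U.V (Nat.pair p w) ∧ p < 2 ^ b then h.choose else 0)
    (s := (Finset.range (2 ^ n)).filter (fun u => KC U u w < b))
    (t := Finset.range (2 ^ b)) ?_ ?_
  · simpa using this
  · intro u hu
    simp only [Finset.mem_coe, Finset.mem_filter, Finset.mem_range] at hu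
    have h := KC_lt_elim U u w b hu.2
    show (if h : ∃ p, u ∈ U.V (Nat.pair p w) ∧ p < 2 ^ b then h.choose else 0) ∈ Finset.range (2 ^ b)
    rw [dif_pos h]
    exact Finset.mem_range.mpr h.choose_spec.2
  · intro u1 hu1 u2 hu2 heq
    simp only [Finset.coe_filter, Set.mem_setOf_eq, Finset.mem_range] at hu1 hu2
    have h1 := KC_lt_elim U u1 w b hu1.2
    have h2 := KC_lt_elim U u2 w b hu2.2
    have heq' : h1.choose = h2.choose := by
      have e1 : (fun u => if h : ∃ p, u ∈ U.V (Nat.pair p w) ∧ p < 2 ^ b then h.choose else 0) u1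
          = h1.choose := dif_pos h1
      have e2 : (fun u => if h : ∃ p, u ∈ U.V (Nat.pair p w) ∧ p < 2 ^ b then h.choose else 0) u2
          = h2.choose := dif_pos h2
      rw [e1, e2] at heq; exact heq
    have m1 := h1.choose_spec.1
    have m2 := h2.choose_spec.1
    rw [heq'] at m1
    exact Part.mem_unique m1 m2

lemma omega_le (m n : ℕ) (h0 : m ≠ 0) (h : m < 2 ^ n) : m.primeFactors.card ≤ n := by
  have h2 : 2 ^ m.primeFactors.card ≤ ∏ p ∈ m.primeFactors, p := by
    rw [← Finset.prod_const]
    exact Finset.prod_le_prod' (fun p hp => (Nat.prime_of_mem_primeFactors hp).two_le)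
  have h3 : ∏ p ∈ m.primeFactors, p ≤ m :=
    Nat.le_of_dvd (Nat.pos_of_ne_zero h0) (Nat.prod_primeFactors_dvd m)
  have : 2 ^ m.primeFactors.card < 2 ^ n := lt_of_le_of_lt (h2.trans h3) h
  exact (Nat.pow_lt_pow_iff_right (by norm_num)).mp this |>.le

/-- Modular hashing decompression succeeds with probability 1−ε.
If x < 2^n has C(x|w) < b and p is uniform over a set P of primes with
|P| ≥ 2^b·n/ε, then with probability at least 1−ε the string x is the unique
u < 2^n with C(u|w) < b and u ≡ x (mod p) — hence the search procedure D, which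
outputs the first such u congruent to x mod p, returns x. -/
theorem modular_hashing_decompression (U : OptimalMachine)
    (n b x w : ℕ) (ε : ℝ) (hε : 0 < ε) (hε1 : ε ≤ 1)
    (hx : x < 2 ^ n) (hxb : KC U x w < b)
    (P : Finset ℕ) (hP : ∀ p ∈ P, p.Prime)
    (hcard : (2 : ℝ) ^ b * n / ε ≤ P.card) :
    (1 - ε) * P.card ≤
      ((P.filter (fun p => ∀ u : ℕ, u < 2 ^ n → KC U u w < b →
          u % p = x % p → u = x)).card : ℝ) := by
  set pred : ℕ → Prop := fun p => ∀ u : ℕ, u < 2 ^ n → KC U u w < b →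
      u % p = x % p → u = x with hpred
  set S := (Finset.range (2 ^ n)).filter (fun u => KC U u w < b) with hS
  set Bad := P.filter (fun p => ¬ pred p) with hBad
  -- Bad primes are covered by prime factors of |x - u| for u ∈ S
  have hcover : Bad ⊆ S.biUnion (fun u => ((x : ℤ) - u).natAbs.primeFactors) := by
    intro p hp
    simp only [hBad, Finset.mem_filter] at hp
    obtain ⟨hpP, hnp⟩ := hp
    simp only [hpred] at hnp
    push_neg at hnp
    obtain ⟨u, hun, hub, hmod, hne⟩ := hnp
    refine Finset.mem_biUnion.mpr ⟨u, ?_, ?_⟩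
    · simp [hS, Finset.mem_filter, Finset.mem_range, hun, hub]
    · have hdvd : (p : ℤ) ∣ (x : ℤ) - u := (Nat.modEq_iff_dvd (a := u) (b := x) (n := p)).mp hmod
      have hdvd' : p ∣ ((x : ℤ) - u).natAbs := by
        have := Int.natAbs_dvd_natAbs.mpr hdvd
        simpa using this
      refine Nat.mem_primeFactors.mpr ⟨hP p hpP, hdvd', ?_⟩
      intro h0
      apply hne
      have : (x : ℤ) - u = 0 := Int.natAbs_eq_zero.mp h0
      omega
  have hBadcard : Bad.card ≤ 2 ^ b * n := by
    calc Bad.card ≤ (S.biUnion (fun u => ((x : ℤ) - u).natAbs.primeFactors)).card :=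
          Finset.card_le_card hcover
      _ ≤ ∑ u ∈ S, ((x : ℤ) - u).natAbs.primeFactors.card := Finset.card_biUnion_le
      _ ≤ ∑ u ∈ S, n := by
          apply Finset.sum_le_sum
          intro u hu
          simp only [hS, Finset.mem_filter, Finset.mem_range] at hu
          rcases eq_or_ne (((x : ℤ) - u).natAbs) 0 with h0 | h0
          · simp [h0]
          · apply omega_le _ n h0
            have : ((x : ℤ) - u).natAbs < 2 ^ n := by
              have := hu.1
              omega
            exact this
      _ = S.card * n := by rw [Finset.sum_const, smul_eq_mul]
      _ ≤ 2 ^ b * n := Nat.mul_le_mul_right n (card_KC_lt U n b w)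
  have hsplit : (P.filter pred).card + Bad.card = P.card :=
    Finset.card_filter_add_card_filter_not (p := pred)
  have hBadR : (Bad.card : ℝ) ≤ 2 ^ b * n := by
    calc (Bad.card : ℝ) ≤ ((2 ^ b * n : ℕ) : ℝ) := Nat.cast_le.mpr hBadcard
      _ = 2 ^ b * n := by push_cast; ring
  have hεP : (2 : ℝ) ^ b * n ≤ ε * P.card := by
    rw [div_le_iff₀ hε] at hcard
    linarith [hcard]
  have : ((P.filter pred).card : ℝ) + Bad.card = P.card := by
    exact_mod_cast congrArg (Nat.cast : ℕ → ℝ) hsplit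
  linarith
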